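/- Let μ be a weight measure over a finite alphabet Σ with values in a linearly ordered cancellative commutative monoid A and let w ∈ Σ*. Then w is μ-prefix normal if and only if p_{w,μ}(j) ≤ p_{w,μ}(i) · p_{w,μ}(j−i) holds for all 0 ≤ i < j ≤ |w|. -/

import Mathlib

/-- The weight of a word: the product of the weights of its letters. -/
def weight {α A : Type*} [CommMonoid A] [LinearOrder A] [IsOrderedCancelMonoid A] (μ : α → A) (w : List α) : A :=
  (w.map μ).prod

/-- The factor-weight function: `factorWeight μ w i` is the maximum weight of a
length-`i` factor (contiguous subword) of `w`. -/
def factorWeight {α A : Type*} [CommMonoid A] [LinearOrder A] [IsOrderedCancelMonoid A] (μ : α → A)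
    (w : List α) (i : ℕ) : A :=
  ((List.range (w.length + 1 - i)).map fun j => weight μ ((w.drop j).take i)).foldr max 1

/-- A word is `μ`-prefix normal if its factor-weight function agrees with its
prefix-weight function. -/
def PrefixNormal {α A : Type*} [CommMonoid A] [LinearOrder A] [IsOrderedCancelMonoid A] (μ : α → A)
    (w : List α) : Prop :=
  ∀ i ≤ w.length, factorWeight μ w i = weight μ (w.take i)

/-- A weight measure is gapfree if for every word `w` and every `1 ≤ i ≤ |w|` there is a
letter `a` with `f_{w,μ}(i) = f_{w,μ}(i-1) * μ a`. -/
def Gapfree {α A : Type*} [CommMonoid A] [LinearOrder A] [IsOrderedCancelMonoid A] (μ : α → A) : Prop :=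
  ∀ w : List α, ∀ i, 1 ≤ i → i ≤ w.length →
    ∃ a : α, factorWeight μ w i = factorWeight μ w (i - 1) * μ a

/-- `pnClass μ w` is the set `P_μ(w)` of words that are factor-weight equivalent to `w`
and `μ`-prefix normal. -/
def pnClass {α A : Type*} [CommMonoid A] [LinearOrder A] [IsOrderedCancelMonoid A] (μ : α → A)
    (w : List α) : Set (List α) :=
  {v | (∀ i, factorWeight μ v i = factorWeight μ w i) ∧ PrefixNormal μ v}

section Aux
variable {A : Type*} [CommMonoid A] [LinearOrder A] [IsOrderedCancelMonoid A]

lemma le_foldr_max' {l : List A} {x : A} (h : x ∈ l) : x ≤ l.foldr max 1 := by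
  induction l with
  | nil => simp at h
  | cons a t ih =>
    rcases List.mem_cons.mp h with rfl | h
    · simp [le_max_iff]
    · exact le_max_of_le_right (ih h)

lemma foldr_max_le' {l : List A} {b : A} (h1 : 1 ≤ b) (h : ∀ x ∈ l, x ≤ b) :
    l.foldr max 1 ≤ b := by
  induction l with
  | nil => simpa
  | cons a t ih =>
    simp only [List.foldr_cons, max_le_iff]
    exact ⟨h a (by simp), ih fun x hx => h x (List.mem_cons_of_mem _ hx)⟩

lemma weight_append' {α : Type*} (μ : α → A) (u v : List α) :
    weight μ (u ++ v) = weight μ u * weight μ v := by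
  simp [weight]

lemma one_le_weight' {α : Type*} (μ : α → A) (hμ : ∀ a, 1 < μ a) (u : List α) :
    1 ≤ weight μ u := by
  apply List.one_le_prod_of_one_le
  rintro x hx
  simp only [List.mem_map] at hx
  obtain ⟨a, _, rfl⟩ := hx
  exact (hμ a).le

lemma take_split' {α : Type*} (w : List α) {i j : ℕ} (hij : i ≤ j) :
    w.take j = w.take i ++ (w.drop i).take (j - i) := by
  conv_lhs => rw [← Nat.add_sub_cancel' hij]
  exact List.take_add (l := w) (i := i) (j := j - i)

end Aux

/-- A word is `μ`-prefix normal iff its prefix-weight function is submultiplicative: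
`p_{w,μ}(j) ≤ p_{w,μ}(i) * p_{w,μ}(j-i)` for all `0 ≤ i < j ≤ |w|`. -/
theorem prefixNormal_iff_prefixWeight_submultiplicative {α A : Type*} [Fintype α]
    [CommMonoid A] [LinearOrder A] [IsOrderedCancelMonoid A] (μ : α → A) (hμ : ∀ a : α, 1 < μ a)
    (w : List α) :
    PrefixNormal μ w ↔
      ∀ i j : ℕ, i < j → j ≤ w.length →
        weight μ (w.take j) ≤ weight μ (w.take i) * weight μ (w.take (j - i)) := by
  constructor
  · intro hpn i j hij hj
    have hkey : weight μ (w.take j) =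
        weight μ (w.take i) * weight μ ((w.drop i).take (j - i)) := by
      rw [take_split' w hij.le, weight_append']
    rw [hkey]
    apply mul_le_mul_right
    rw [← hpn (j - i) (le_trans (Nat.sub_le _ _) hj)]
    apply le_foldr_max'
    simp only [List.mem_map, List.mem_range]
    exact ⟨i, by omega, rfl⟩
  · intro h i hi
    unfold factorWeight
    apply le_antisymm
    · apply foldr_max_le' (one_le_weight' μ hμ _)
      intro x hx
      simp only [List.mem_map, List.mem_range] at hx
      obtain ⟨k, hk, rfl⟩ := hx
      rcases Nat.eq_zero_or_pos i with rfl | hipos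
      · simp
      rcases Nat.eq_zero_or_pos k with rfl | hkpos
      · simp
      have hle : k + i ≤ w.length := by omega
      have hsub := h k (k + i) (by omega) hle
      have hsplit : weight μ (w.take (k + i)) =
          weight μ (w.take k) * weight μ ((w.drop k).take i) := by
        rw [take_split' w (by omega : k ≤ k + i), weight_append']
        simp
      rw [hsplit, Nat.add_sub_cancel_left] at hsub
      exact le_of_mul_le_mul_left' hsub
    · apply le_foldr_max'
      simp only [List.mem_map, List.mem_range]
      exact ⟨0, by omega, by simp⟩
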